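/- Let ξ : ω → ω be a finite-to-one surjection with lim_n |ξ⁻¹(n)| = ∞ and ∏_{n∈ω} (1 − 2^{−|ξ⁻¹(n)|}) = 0. For each n ∈ ω, the set F_n = {A ⊆ ω : A ∩ ξ⁻¹(k) ≠ ∅ for all k ≥ n} has Haar measure zero in the Cantor cube 2^ω. Consequently, any filter F on ω with ξ(F) = Fr is contained in a set of Haar measure zero. -/

import Mathlib

open Set Filter MeasureTheory Classical Topology

/-- Characteristic-function embedding of `𝒫(ω)` into the Cantor space `2^ω`. -/
noncomputable def chiFun (A : Set ℕ) : ℕ → Bool := fun n => decide (n ∈ A)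

lemma two_pow_sub_one_mul (c : ℕ) :
    ((2 ^ c - 1 : ℕ) : ENNReal) * (1 / 2) ^ c = 1 - (1 / 2 : ENNReal) ^ c := by
  have h2 : ((2:ENNReal) ^ c) ≠ 0 := by positivity
  have h2' : ((2:ENNReal) ^ c) ≠ ⊤ := ENNReal.pow_ne_top (by norm_num)
  have h1 : (1:ℕ) ≤ 2 ^ c := Nat.one_le_two_pow
  rw [ENNReal.natCast_sub]
  push_cast
  rw [one_div, ← ENNReal.inv_pow,
    ENNReal.sub_mul (fun _ _ => ENNReal.inv_ne_top.mpr h2),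
    ENNReal.mul_inv_cancel h2 h2', one_mul]

lemma key (ξ : ℕ → ℕ) (hfin : ∀ n, (ξ ⁻¹' {n}).Finite)
    (μ : Measure (ℕ → Bool))
    (hμ : ∀ (s : Finset ℕ) (f : ℕ → Bool),
      μ {x | ∀ i ∈ s, x i = f i} = (1 / 2 : ENNReal) ^ s.card) :
    ∀ (K : Finset ℕ) (T : Finset ℕ) (f : ℕ → Bool),
      (∀ k ∈ K, ∀ m, ξ m = k → m ∉ T) →
      μ ({x | ∀ i ∈ T, x i = f i} ∩ {x | ∀ k ∈ K, ∃ m, ξ m = k ∧ x m = true})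
        ≤ (1 / 2) ^ T.card * ∏ k ∈ K, (1 - (1 / 2 : ENNReal) ^ (ξ ⁻¹' {k}).ncard) := by
  intro K
  induction K using Finset.induction_on with
  | empty =>
    intro T f _
    simp only [Finset.notMem_empty, false_implies, implies_true, setOf_true, inter_univ,
      Finset.prod_empty, mul_one]
    exact le_of_eq (hμ T f)
  | @insert a K ha ih =>
    intro T f hT
    set sa : Finset ℕ := (hfin a).toFinset with hsa_def
    have hsa_mem : ∀ m, m ∈ sa ↔ ξ m = a := by
      intro m; simp [hsa_def, Set.Finite.mem_toFinset]
    have hsa_card : sa.card = (ξ ⁻¹' {a}).ncard := (Set.ncard_eq_toFinset_card _ (hfin a)).symm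
    set Gset : Finset (({i // i ∈ sa} → Bool)) :=
      Finset.univ.filter (fun g => ∃ m, g m = true) with hG_def
    set f' : ({i // i ∈ sa} → Bool) → ℕ → Bool :=
      fun g i => if h : i ∈ sa then g ⟨i, h⟩ else f i with hf'_def
    -- subset claim
    have hsub : ({x : ℕ → Bool | ∀ i ∈ T, x i = f i} ∩
        {x | ∀ k ∈ insert a K, ∃ m, ξ m = k ∧ x m = true}) ⊆
        ⋃ g ∈ Gset, ({x | ∀ i ∈ T ∪ sa, x i = f' g i} ∩
          {x | ∀ k ∈ K, ∃ m, ξ m = k ∧ x m = true}) := by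
      rintro x ⟨hx1, hx2⟩
      have hxa := hx2 a (Finset.mem_insert_self a K)
      obtain ⟨m, hm, hmt⟩ := hxa
      refine mem_iUnion₂.2 ⟨fun i => x i.1, ?_, ?_, ?_⟩
      · rw [hG_def, Finset.mem_filter]
        exact ⟨Finset.mem_univ _, ⟨⟨m, (hsa_mem m).2 hm⟩, hmt⟩⟩
      · intro i hi
        by_cases h : i ∈ sa
        · simp [hf'_def, h]
        · have hiT : i ∈ T := by
            rcases Finset.mem_union.1 hi with h' | h'
            · exact h'
            · exact absurd h' h
          simp [hf'_def, h, hx1 i hiT]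
      · intro k hk
        exact hx2 k (Finset.mem_insert_of_mem hk)
    have hmono := measure_mono (μ := μ) hsub
    have hle1 : μ (⋃ g ∈ Gset, ({x | ∀ i ∈ T ∪ sa, x i = f' g i} ∩
          {x | ∀ k ∈ K, ∃ m, ξ m = k ∧ x m = true})) ≤
        ∑ g ∈ Gset, μ ({x | ∀ i ∈ T ∪ sa, x i = f' g i} ∩
          {x | ∀ k ∈ K, ∃ m, ξ m = k ∧ x m = true}) :=
      measure_biUnion_finset_le _ _
    have hterm : ∀ g ∈ Gset, μ ({x | ∀ i ∈ T ∪ sa, x i = f' g i} ∩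
          {x | ∀ k ∈ K, ∃ m, ξ m = k ∧ x m = true}) ≤
        (1 / 2) ^ (T ∪ sa).card * ∏ k ∈ K, (1 - (1 / 2 : ENNReal) ^ (ξ ⁻¹' {k}).ncard) := by
      intro g _
      apply ih (T ∪ sa) (f' g)
      intro k hk m hmk
      rw [Finset.mem_union]
      push_neg
      constructor
      · exact hT k (Finset.mem_insert_of_mem hk) m hmk
      · intro hmsa
        have hak : a = k := by rw [← (hsa_mem m).1 hmsa, hmk]
        exact ha (hak ▸ hk)
    -- disjointness of T and sa
    have hdisj : Disjoint T sa := by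
      rw [Finset.disjoint_right]
      intro m hm
      exact hT a (Finset.mem_insert_self a K) m ((hsa_mem m).1 hm)
    have hcardU : (T ∪ sa).card = T.card + sa.card := Finset.card_union_of_disjoint hdisj
    -- cardinality of Gset
    have hGcard : Gset.card = 2 ^ sa.card - 1 := by
      have : Gset = Finset.univ.erase (fun _ => false) := by
        ext g
        simp only [hG_def, Finset.mem_filter, Finset.mem_univ, true_and, Finset.mem_erase,
          and_true]
        constructor
        · rintro ⟨m, hm⟩ hg
          rw [hg] at hm; exact Bool.false_ne_true hm
        · intro hg
          by_contra hc
          push_neg at hc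
          exact hg (funext fun m => by simpa using hc m)
      rw [this, Finset.card_erase_of_mem (Finset.mem_univ _), Finset.card_univ,
        Fintype.card_fun, Fintype.card_coe, Fintype.card_bool]
    calc μ _ ≤ _ := le_trans hmono hle1
      _ ≤ ∑ _g ∈ Gset, ((1 / 2) ^ (T ∪ sa).card *
            ∏ k ∈ K, (1 - (1 / 2 : ENNReal) ^ (ξ ⁻¹' {k}).ncard)) :=
        Finset.sum_le_sum hterm
      _ = (Gset.card : ENNReal) * ((1 / 2) ^ (T ∪ sa).card *
            ∏ k ∈ K, (1 - (1 / 2 : ENNReal) ^ (ξ ⁻¹' {k}).ncard)) := by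
        rw [Finset.sum_const, nsmul_eq_mul]
      _ = (1 / 2) ^ T.card * ∏ k ∈ insert a K, (1 - (1 / 2 : ENNReal) ^ (ξ ⁻¹' {k}).ncard) := by
        rw [hGcard, hcardU, Finset.prod_insert ha, pow_add, ← hsa_card]
        rw [← two_pow_sub_one_mul sa.card]
        push_cast [ENNReal.natCast_sub]
        ring

/-- let `ξ` be a finite-to-one surjection with `|ξ⁻¹(n)| → ∞` and
`∏ (1 - 2^{-|ξ⁻¹(n)|}) = 0`, and let `μ` be the Haar (uniform product) measure on the
Cantor cube `2^ω`.  Then each set `F_n = {A : ∀ k ≥ n, A ∩ ξ⁻¹(k) ≠ ∅}` is `μ`-null,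
and every filter `F` with `ξ(F) = Fr` is contained in a `μ`-null set. -/
theorem stmt5 (ξ : ℕ → ℕ) (hfin : ∀ n, (ξ ⁻¹' {n}).Finite) (hsurj : Function.Surjective ξ)
    (hlim : Filter.Tendsto (fun n => (ξ ⁻¹' {n}).ncard) Filter.atTop Filter.atTop)
    (hprod : Filter.Tendsto
      (fun N => ∏ n ∈ Finset.range N, (1 - ((2 : ℝ) ^ (ξ ⁻¹' {n}).ncard)⁻¹))
      Filter.atTop (nhds 0))
    (μ : Measure (ℕ → Bool))
    (hμ : ∀ (s : Finset ℕ) (f : ℕ → Bool),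
      μ {x | ∀ i ∈ s, x i = f i} = (1 / 2 : ENNReal) ^ s.card) :
    (∀ n : ℕ, μ {x : ℕ → Bool | ∀ k ≥ n, ∃ m, ξ m = k ∧ x m = true} = 0) ∧
    ∀ F : Filter ℕ, Filter.map ξ F = Filter.cofinite →
      ∃ S : Set (ℕ → Bool), μ S = 0 ∧ chiFun '' {A : Set ℕ | A ∈ F} ⊆ S := by
  set r : ℕ → ℝ := fun k => 1 - ((2 : ℝ) ^ (ξ ⁻¹' {k}).ncard)⁻¹ with hr_def
  have hcpos : ∀ k, 1 ≤ (ξ ⁻¹' {k}).ncard := by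
    intro k
    obtain ⟨m, hm⟩ := hsurj k
    exact (Set.ncard_pos (hfin k)).2 ⟨m, hm⟩
  have hrpos : ∀ k, 0 < r k := by
    intro k
    have h1 : (1 : ℝ) < 2 ^ (ξ ⁻¹' {k}).ncard := by
      have hc := hcpos k
      exact one_lt_pow₀ (by norm_num) (by omega)
    simp only [hr_def, sub_pos]
    rw [inv_lt_one_iff₀]
    right; exact h1
  have hpart1 : ∀ n : ℕ, μ {x : ℕ → Bool | ∀ k ≥ n, ∃ m, ξ m = k ∧ x m = true} = 0 := by
    intro n
    have h1 : ∀ N, μ {x : ℕ → Bool | ∀ k ≥ n, ∃ m, ξ m = k ∧ x m = true} ≤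
        ∏ k ∈ Finset.Ico n N, (1 - (1 / 2 : ENNReal) ^ (ξ ⁻¹' {k}).ncard) := by
      intro N
      have hk := key ξ hfin μ hμ (Finset.Ico n N) ∅ (fun _ => false) (by simp)
      simp only [Finset.notMem_empty, false_implies, implies_true, setOf_true, univ_inter,
        Finset.card_empty, pow_zero, one_mul] at hk
      refine le_trans (measure_mono ?_) hk
      intro x hx k hkmem
      exact hx k (Finset.mem_Ico.1 hkmem).1
    have hC : (∏ k ∈ Finset.range n, r k) ≠ 0 :=
      Finset.prod_ne_zero_iff.2 fun k _ => (hrpos k).ne'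
    have htend : Filter.Tendsto (fun N => ∏ k ∈ Finset.Ico n N, r k) Filter.atTop (𝓝 0) := by
      have hd := hprod.div_const (∏ k ∈ Finset.range n, r k)
      rw [zero_div] at hd
      refine Filter.Tendsto.congr' ?_ hd
      filter_upwards [Filter.eventually_ge_atTop n] with N hN
      rw [← Finset.prod_range_mul_prod_Ico r hN, mul_comm, mul_div_assoc, div_self hC, mul_one]
    have hEq : ∀ N, (∏ k ∈ Finset.Ico n N, (1 - (1 / 2 : ENNReal) ^ (ξ ⁻¹' {k}).ncard)) =
        ENNReal.ofReal (∏ k ∈ Finset.Ico n N, r k) := by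
      intro N
      rw [ENNReal.ofReal_prod_of_nonneg (fun k _ => (hrpos k).le)]
      refine Finset.prod_congr rfl fun k _ => ?_
      rw [hr_def]
      rw [ENNReal.ofReal_sub _ (by positivity), ENNReal.ofReal_one,
        ENNReal.ofReal_inv_of_pos (by positivity), ENNReal.ofReal_pow (by norm_num),
        ENNReal.ofReal_ofNat, one_div, ENNReal.inv_pow]
    refine le_antisymm ?_ zero_le
    have htend' : Filter.Tendsto (fun N => ENNReal.ofReal (∏ k ∈ Finset.Ico n N, r k))
        Filter.atTop (𝓝 0) := by
      have := (ENNReal.continuous_ofReal.tendsto 0).comp htend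
      rw [ENNReal.ofReal_zero] at this
      exact this
    exact ge_of_tendsto htend' (Filter.Eventually.of_forall fun N => (hEq N) ▸ h1 N)
  refine ⟨hpart1, ?_⟩
  intro F hF
  refine ⟨⋃ n, {x : ℕ → Bool | ∀ k ≥ n, ∃ m, ξ m = k ∧ x m = true},
    measure_iUnion_null hpart1, ?_⟩
  rintro _ ⟨A, hA, rfl⟩
  have hmem : ξ '' A ∈ Filter.map ξ F :=
    Filter.mem_map.2 (F.sets_of_superset hA (Set.subset_preimage_image ξ A))
  rw [hF, Filter.mem_cofinite] at hmem
  obtain ⟨b, hb⟩ := hmem.bddAbove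
  refine mem_iUnion.2 ⟨b + 1, ?_⟩
  intro k hk
  have hkA : k ∈ ξ '' A := by
    by_contra h
    have := hb h
    omega
  obtain ⟨m, hmA, hmk⟩ := hkA
  exact ⟨m, hmk, by simp [chiFun, hmA]⟩
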